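/- Let G be an intersection graph of closed intervals of lengths in [l_min, l_max] with l_min > 0, let γ = l_max/l_min, and let k ≥ 1. Running the greedy-by-weight maximum weight independent set algorithm k times — each time on the subgraph induced by vertices not yet selected, collecting independent sets I_1, ..., I_k — yields a k-colorable subgraph ∪_j I_j whose total weight is at least (1 − e^{−1/(2+γ)}) times the maximum weight of any k-colorable induced subgraph of G. -/

import Mathlib

/-- Greedy independent set: process the list in order, adding a vertex whenever it is
non-adjacent to all previously added vertices. -/
noncomputable def greedySelect {V : Type*} [DecidableEq V] (adj : V → V → Prop) :
    List V → Finset V → Finset V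
  | [], acc => acc
  | v :: rest, acc =>
    haveI := Classical.propDecidable (∀ u ∈ acc, ¬ adj v u)
    if ∀ u ∈ acc, ¬ adj v u then greedySelect adj rest (insert v acc)
    else greedySelect adj rest acc

/-- Iterate the greedy independent set algorithm `k` times on the residual vertex list,
returning the union of the selected independent sets. -/
noncomputable def greedyRounds {V : Type*} [DecidableEq V] (adj : V → V → Prop) :
    ℕ → List V → Finset V
  | 0, _ => ∅
  | k + 1, l =>
    let I := greedySelect adj l ∅
    I ∪ greedyRounds adj k (l.filter fun v => v ∉ I)

section Aux

variable {ι : Type*} [DecidableEq ι] (adj : ι → ι → Prop)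

lemma subset_greedySelect : ∀ (l : List ι) (acc : Finset ι), acc ⊆ greedySelect adj l acc
  | [], acc => by rw [greedySelect]
  | v :: rest, acc => by
    rw [greedySelect]
    split_ifs with h
    · exact (Finset.subset_insert v acc).trans (subset_greedySelect rest _)
    · exact subset_greedySelect rest acc

lemma mem_of_mem_greedySelect : ∀ (l : List ι) (acc : Finset ι) (v : ι),
    v ∈ greedySelect adj l acc → v ∈ l ∨ v ∈ acc
  | [], acc, v => by rw [greedySelect]; exact fun h => Or.inr h
  | u :: rest, acc, v => by
    rw [greedySelect]
    split_ifs with h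
    · intro hv
      rcases mem_of_mem_greedySelect rest _ v hv with h1 | h1
      · exact Or.inl (List.mem_cons_of_mem _ h1)
      · rcases Finset.mem_insert.1 h1 with rfl | h2
        · exact Or.inl (List.mem_cons_self)
        · exact Or.inr h2
    · intro hv
      rcases mem_of_mem_greedySelect rest _ v hv with h1 | h1
      · exact Or.inl (List.mem_cons_of_mem _ h1)
      · exact Or.inr h1

lemma greedySelect_dominates (w : ι → ℝ) :
    ∀ (l : List ι), l.Pairwise (fun x y => w y ≤ w x) →
      ∀ (acc : Finset ι), (∀ u ∈ acc, ∀ s ∈ l, w s ≤ w u) →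
      ∀ s ∈ l, s ∈ greedySelect adj l acc ∨
        ∃ u ∈ greedySelect adj l acc, adj s u ∧ w s ≤ w u
  | [], _, acc => by intro _ s hs; exact absurd hs List.not_mem_nil
  | x :: rest, hsort, acc => by
    intro hacc s hs
    rw [greedySelect]
    split_ifs with h
    · rcases List.mem_cons.1 hs with rfl | hs'
      · exact Or.inl (subset_greedySelect adj rest _ (Finset.mem_insert_self s acc))
      · refine greedySelect_dominates w rest hsort.of_cons _ ?_ s hs'
        intro u hu t ht
        rcases Finset.mem_insert.1 hu with rfl | hu'
        · exact List.rel_of_pairwise_cons hsort ht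
        · exact hacc u hu' t (List.mem_cons_of_mem _ ht)
    · rcases List.mem_cons.1 hs with rfl | hs'
      · push_neg at h
        obtain ⟨u, hu, hadj⟩ := h
        exact Or.inr ⟨u, subset_greedySelect adj rest acc hu, hadj,
          hacc u hu s (List.mem_cons_self)⟩
      · refine greedySelect_dominates w rest hsort.of_cons acc ?_ s hs'
        intro u hu t ht
        exact hacc u hu t (List.mem_cons_of_mem _ ht)

lemma mem_of_mem_greedyRounds : ∀ (m : ℕ) (l : List ι) (v : ι),
    v ∈ greedyRounds adj m l → v ∈ l
  | 0, l, v => by rw [greedyRounds]; simp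
  | m + 1, l, v => by
    rw [greedyRounds]
    intro hv
    rcases Finset.mem_union.1 hv with h | h
    · rcases mem_of_mem_greedySelect adj l ∅ v h with h1 | h1
      · exact h1
      · simp at h1
    · exact List.mem_of_mem_filter (mem_of_mem_greedyRounds m _ v h)

lemma interval_packing (a len : ι → ℝ) (lmin lmax : ℝ)
    (hlmin : 0 < lmin) (hml : lmin ≤ lmax)
    (hlen : ∀ i, lmin ≤ len i ∧ len i ≤ lmax)
    (c L : ℝ) (hL : L ≤ lmax)
    (S : Finset ι)
    (hdisj : ∀ s ∈ S, ∀ t ∈ S, s ≠ t →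
      ¬ (Set.Icc (a s) (a s + len s) ∩ Set.Icc (a t) (a t + len t)).Nonempty)
    (hmeet : ∀ s ∈ S, (Set.Icc (a s) (a s + len s) ∩ Set.Icc c (c + L)).Nonempty) :
    (S.card : ℝ) ≤ 2 + lmax / lmin := by
  have hdiv : (0:ℝ) ≤ lmax / lmin := div_nonneg (hlmin.le.trans hml) hlmin.le
  have hmeet' : ∀ s ∈ S, a s ≤ c + L ∧ c ≤ a s + len s := by
    intro s hs
    obtain ⟨x, ⟨hx1, hx2⟩, hx3, hx4⟩ := hmeet s hs
    exact ⟨hx1.trans hx4, hx3.trans hx2⟩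
  have hsep : ∀ s ∈ S, ∀ t ∈ S, a s < a t → a s + len s < a t := by
    intro s hs t ht hlt
    by_contra hc
    push_neg at hc
    refine hdisj s hs t ht (fun h => lt_irrefl _ (h ▸ hlt)) ⟨a t, ⟨hlt.le, hc⟩,
      le_refl _, le_add_of_nonneg_right (hlmin.le.trans (hlen t).1)⟩
  have hinj : Set.InjOn a S := by
    intro s hs t ht heq
    by_contra hne
    refine hdisj s hs t ht hne ⟨a s, ⟨le_refl _, le_add_of_nonneg_right (hlmin.le.trans (hlen s).1)⟩,
      heq ▸ ⟨le_refl _, le_add_of_nonneg_right (hlmin.le.trans (hlen t).1)⟩⟩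
  set n := S.card with hn
  by_cases hsmall : n ≤ 2
  · calc (n:ℝ) ≤ 2 := by exact_mod_cast hsmall
    _ ≤ 2 + lmax / lmin := by linarith
  push_neg at hsmall
  set T : Finset ℝ := S.image a with hT
  have hcardT : T.card = n := Finset.card_image_of_injOn hinj
  set f := T.orderEmbOfFin hcardT with hf
  have hfm : ∀ i : Fin n, ∃ s ∈ S, a s = f i := by
    intro i
    have : f i ∈ T := T.orderEmbOfFin_mem hcardT i
    rwa [hT, Finset.mem_image] at this
  have hstep : ∀ i j : Fin n, i < j → (f i : ℝ) + lmin ≤ f j := by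
    intro i j hij
    obtain ⟨s, hs, has⟩ := hfm i
    obtain ⟨t, ht, hat⟩ := hfm j
    have hlt : a s < a t := by rw [has, hat]; exact (T.orderEmbOfFin hcardT).strictMono hij
    have := hsep s hs t ht hlt
    have := (hlen s).1
    rw [← has, ← hat]; linarith
  have h1n : 1 < n := by omega
  have h0n : 0 < n := by omega
  have hc1 : c ≤ f ⟨1, h1n⟩ := by
    obtain ⟨s, hs, has⟩ := hfm ⟨0, h0n⟩
    obtain ⟨t, ht, hat⟩ := hfm ⟨1, h1n⟩
    have hlt : a s < a t := by
      rw [has, hat]; exact (T.orderEmbOfFin hcardT).strictMono (by simp [Fin.lt_def])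
    have := hsep s hs t ht hlt
    have := (hmeet' s hs).2
    rw [← hat]; linarith
  have htel : ∀ (m : ℕ) (h : 1 + m < n), (f ⟨1, h1n⟩ : ℝ) + m * lmin ≤ f ⟨1 + m, h⟩ := by
    intro m
    induction m with
    | zero => intro h; simp
    | succ p ih =>
      intro h
      have hp : 1 + p < n := by omega
      have := ih hp
      have := hstep ⟨1 + p, hp⟩ ⟨1 + (p + 1), h⟩ (by simp [Fin.lt_def])
      push_cast
      push_cast at this ⊢
      linarith
  have hlast := htel (n - 2) (by omega)
  obtain ⟨t, ht, hat⟩ := hfm ⟨1 + (n - 2), by omega⟩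
  have hub : a t ≤ c + L := (hmeet' t ht).1
  have hcast : ((n - 2 : ℕ) : ℝ) = (n : ℝ) - 2 := by
    have : (2:ℕ) ≤ n := by omega
    push_cast [this]; ring
  rw [hcast] at hlast
  rw [← hat] at hlast
  have h2 : ((n:ℝ) - 2) * lmin ≤ lmax := by linarith
  have h3 : (n:ℝ) - 2 ≤ lmax / lmin := (le_div_iff₀ hlmin).2 (by linarith)
  linarith

lemma greedy_approx (w : ι → ℝ) (hw : ∀ i, 0 ≤ w i) (γ : ℝ)
    (P : ∀ v : ι, ∀ S : Finset ι, (∀ s ∈ S, ∀ t ∈ S, s ≠ t → ¬ adj s t) →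
      (∀ s ∈ S, s = v ∨ adj s v) → (S.card : ℝ) ≤ 2 + γ)
    (l : List ι) (hsort : l.Pairwise fun x y => w y ≤ w x)
    (S : Finset ι) (hSind : ∀ s ∈ S, ∀ t ∈ S, s ≠ t → ¬ adj s t)
    (hSl : ∀ s ∈ S, s ∈ l) :
    ∑ s ∈ S, w s ≤ (2 + γ) * ∑ v ∈ greedySelect adj l ∅, w v := by
  classical
  set G := greedySelect adj l ∅ with hG
  have hdom : ∀ s ∈ S, ∃ u, u ∈ G ∧ (s = u ∨ adj s u) ∧ w s ≤ w u := by
    intro s hs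
    rcases greedySelect_dominates adj w l hsort ∅ (by simp) s (hSl s hs) with h | ⟨u, hu, h1, h2⟩
    · exact ⟨s, h, Or.inl rfl, le_refl _⟩
    · exact ⟨u, hu, Or.inr h1, h2⟩
  set φ : ι → ι := fun s =>
    if h : ∃ u, u ∈ G ∧ (s = u ∨ adj s u) ∧ w s ≤ w u then h.choose else s with hφ
  have hφ1 : ∀ s ∈ S, φ s ∈ G ∧ (s = φ s ∨ adj s (φ s)) ∧ w s ≤ w (φ s) := by
    intro s hs
    have h := hdom s hs
    simp only [hφ, dif_pos h]
    exact h.choose_spec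
  have key : ∑ s ∈ S, w s = ∑ v ∈ G, ∑ s ∈ S.filter (fun s => φ s = v), w s :=
    (Finset.sum_fiberwise_of_maps_to (fun s hs => (hφ1 s hs).1) w).symm
  rw [key, Finset.mul_sum]
  refine Finset.sum_le_sum fun v hv => ?_
  have hfiber : ∀ s ∈ S.filter (fun s => φ s = v), w s ≤ w v := by
    intro s hs
    rw [Finset.mem_filter] at hs
    have := (hφ1 s hs.1).2.2
    rwa [hs.2] at this
  have hcard : ((S.filter (fun s => φ s = v)).card : ℝ) ≤ 2 + γ := by
    refine P v _ (fun s hs t ht => hSind s (Finset.mem_filter.1 hs).1 t (Finset.mem_filter.1 ht).1) ?_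
    intro s hs
    rw [Finset.mem_filter] at hs
    have := (hφ1 s hs.1).2.1
    rwa [hs.2] at this
  calc ∑ s ∈ S.filter (fun s => φ s = v), w s
      ≤ ∑ _s ∈ S.filter (fun s => φ s = v), w v := Finset.sum_le_sum hfiber
    _ = ((S.filter (fun s => φ s = v)).card : ℝ) * w v := by
        rw [Finset.sum_const, nsmul_eq_mul]
    _ ≤ (2 + γ) * w v := mul_le_mul_of_nonneg_right hcard (hw v)

lemma rounds_bound (w : ι → ℝ) (hw : ∀ i, 0 ≤ w i) (γ : ℝ) (hγ1 : 1 ≤ γ)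
    (P : ∀ v : ι, ∀ S : Finset ι, (∀ s ∈ S, ∀ t ∈ S, s ≠ t → ¬ adj s t) →
      (∀ s ∈ S, s = v ∨ adj s v) → (S.card : ℝ) ≤ 2 + γ)
    (k : ℕ) (hk : 1 ≤ k)
    (V' : Finset ι) (g : ι → Fin k)
    (hcol : ∀ u ∈ V', ∀ v ∈ V', adj u v → g u ≠ g v) :
    ∀ (m : ℕ) (l : List ι), l.Pairwise (fun x y => w y ≤ w x) →
      ∑ v ∈ V'.filter (fun v => v ∈ l), w v - ∑ v ∈ greedyRounds adj m l, w v ≤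
        (1 - 1/(k*(2+γ)))^m * ∑ v ∈ V'.filter (fun v => v ∈ l), w v := by
  intro m
  induction m with
  | zero =>
    intro l _
    rw [greedyRounds]
    simp
  | succ m ih =>
    intro l hsort
    classical
    have h2γ : (0:ℝ) < 2 + γ := by linarith
    have hkpos : (0:ℝ) < k := by exact_mod_cast hk
    have hkγ : (0:ℝ) < (k:ℝ) * (2+γ) := mul_pos hkpos h2γ
    have hTdef : greedyRounds adj (m+1) l =
        greedySelect adj l ∅ ∪
          greedyRounds adj m (l.filter fun v => v ∉ greedySelect adj l ∅) := by
      rw [greedyRounds]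
    have hk1 : (1:ℝ) ≤ (k:ℝ) := by exact_mod_cast hk
    have hd0 : 0 < 1/((k:ℝ)*(2+γ)) := by positivity
    have hd1 : 1/((k:ℝ)*(2+γ)) ≤ 1 := by
      rw [div_le_one hkγ]; nlinarith
    have hβ0 : 0 ≤ 1 - 1/((k:ℝ)*(2+γ)) := by linarith
    have hβ1 : 1 - 1/((k:ℝ)*(2+γ)) ≤ 1 := by linarith
    set I := greedySelect adj l ∅ with hI
    set l' := l.filter (fun v => v ∉ I) with hl'
    set A := V'.filter (fun v => v ∈ l) with hA
    have hsort' : l'.Pairwise (fun x y => w y ≤ w x) := hsort.filter _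
    have hA' : V'.filter (fun v => v ∈ l') = A.filter (fun v => v ∉ I) := by
      ext x
      simp only [hA, hl', Finset.mem_filter, List.mem_filter, decide_not,
        Bool.not_eq_true', decide_eq_false_iff_not, and_assoc]
    have ihl := ih l' hsort'
    rw [hA'] at ihl
    have hdisjIT : Disjoint I (greedyRounds adj m l') := by
      rw [Finset.disjoint_right]
      intro v hv
      have h1 := mem_of_mem_greedyRounds adj m l' v hv
      rw [hl', List.mem_filter] at h1
      simpa using h1.2
    -- pigeonhole: best color class
    haveI : Nonempty (Fin k) := ⟨⟨0, hk⟩⟩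
    have hfib : ∑ c : Fin k, ∑ s ∈ A.filter (fun s => g s = c), w s = ∑ s ∈ A, w s :=
      Finset.sum_fiberwise A g w
    have hex : ∃ c : Fin k, (∑ v ∈ A, w v) / k ≤ ∑ s ∈ A.filter (fun s => g s = c), w s := by
      by_contra hcon
      push_neg at hcon
      have hlt := Finset.sum_lt_sum_of_nonempty (Finset.univ_nonempty (α := Fin k))
        (fun c _ => hcon c)
      rw [hfib, Finset.sum_const, Finset.card_univ, Fintype.card_fin, nsmul_eq_mul,
        mul_div_cancel₀ _ (ne_of_gt hkpos)] at hlt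
      exact lt_irrefl _ hlt
    obtain ⟨c, hc⟩ := hex
    have happrox : ∑ s ∈ A.filter (fun s => g s = c), w s ≤ (2 + γ) * ∑ v ∈ I, w v := by
      refine greedy_approx adj w hw γ P l hsort _ ?_ ?_
      · intro s hs t ht hst hadj
        have hs1 := Finset.mem_filter.1 hs
        have ht1 := Finset.mem_filter.1 ht
        have hs2 := Finset.mem_filter.1 hs1.1
        have ht2 := Finset.mem_filter.1 ht1.1
        exact hcol s hs2.1 t ht2.1 hadj (hs1.2.trans ht1.2.symm)
      · intro s hs
        exact (Finset.mem_filter.1 (Finset.mem_filter.1 hs).1).2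
    have hgain : (1 - (1 - 1/((k:ℝ)*(2+γ)))) * ∑ v ∈ A, w v ≤ ∑ v ∈ I, w v := by
      have ht' : (∑ v ∈ A, w v) ≤ (2+γ) * (∑ v ∈ I, w v) * k := by
        have := hc.trans happrox
        rw [div_le_iff₀ hkpos] at this
        linarith
      rw [sub_sub_cancel, div_mul_eq_mul_div, one_mul, div_le_iff₀ hkγ]
      nlinarith
    have hsplit : ∑ v ∈ A.filter (fun v => v ∉ I), w v +
        ∑ v ∈ A.filter (fun v => ¬ v ∉ I), w v = ∑ v ∈ A, w v := by
      exact Finset.sum_filter_add_sum_filter_not A _ w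
    have hAinI : ∑ v ∈ A.filter (fun v => ¬ v ∉ I), w v ≤ ∑ v ∈ I, w v := by
      refine Finset.sum_le_sum_of_subset_of_nonneg ?_ (fun i _ _ => hw i)
      intro x hx
      have := (Finset.mem_filter.1 hx).2
      simpa using this
    rw [hTdef, Finset.sum_union hdisjIT]
    have hpow0 : (0:ℝ) ≤ (1 - 1/((k:ℝ)*(2+γ)))^m := pow_nonneg hβ0 m
    have hpow1 : (1 - 1/((k:ℝ)*(2+γ)))^m ≤ 1 := pow_le_one₀ hβ0 hβ1
    have hWA'0 : (0:ℝ) ≤ ∑ v ∈ A.filter (fun v => v ∉ I), w v :=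
      Finset.sum_nonneg fun i _ => hw i
    have hWin0 : (0:ℝ) ≤ ∑ v ∈ A.filter (fun v => ¬ v ∉ I), w v :=
      Finset.sum_nonneg fun i _ => hw i
    rw [pow_succ]
    nlinarith [ihl, hgain, hAinI, hsplit,
      mul_nonneg (sub_nonneg.2 hpow1)
        (sub_nonneg.2 hAinI),
      mul_nonneg hpow0 (sub_nonneg.2 hgain)]

end Aux

theorem iterated_greedy_interval_k_colorable {ι : Type*} [Fintype ι] [DecidableEq ι]
    (a len : ι → ℝ) (lmin lmax : ℝ) (hlmin : 0 < lmin)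
    (hlen : ∀ i, lmin ≤ len i ∧ len i ≤ lmax)
    (γ : ℝ) (hγ : γ = lmax / lmin)
    (adj : ι → ι → Prop)
    (hadj : ∀ i j, adj i j ↔ i ≠ j ∧
      (Set.Icc (a i) (a i + len i) ∩ Set.Icc (a j) (a j + len j)).Nonempty)
    (w : ι → ℝ) (hw : ∀ i, 0 ≤ w i) (k : ℕ) (hk : 1 ≤ k)
    (l : List ι) (hsort : l.Pairwise fun x y => w y ≤ w x)
    (hnodup : l.Nodup) (hall : ∀ i : ι, i ∈ l)
    (V' : Finset ι) (g : ι → Fin k)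
    (hcol : ∀ u ∈ V', ∀ v ∈ V', adj u v → g u ≠ g v) :
    (1 - Real.exp (-1 / (2 + γ))) * ∑ v ∈ V', w v ≤
      ∑ v ∈ greedyRounds adj k l, w v := by
  classical
  rcases isEmpty_or_nonempty ι with hE | hNE
  · have hV : V' = ∅ := Finset.eq_empty_of_forall_notMem fun v _ => (IsEmpty.false v)
    rw [hV]
    simp only [Finset.sum_empty, mul_zero]
    exact Finset.sum_nonneg fun i _ => hw i
  · obtain ⟨i0⟩ := hNE
    have hml : lmin ≤ lmax := (hlen i0).1.trans (hlen i0).2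
    have hγ1 : 1 ≤ γ := hγ ▸ (one_le_div hlmin).2 hml
    have h2γ : (0:ℝ) < 2 + γ := by linarith
    have P : ∀ v : ι, ∀ S : Finset ι, (∀ s ∈ S, ∀ t ∈ S, s ≠ t → ¬ adj s t) →
        (∀ s ∈ S, s = v ∨ adj s v) → (S.card : ℝ) ≤ 2 + γ := by
      intro v S hind hto
      rw [hγ]
      refine interval_packing a len lmin lmax hlmin hml hlen (a v) (len v) (hlen v).2 S ?_ ?_
      · intro s hs t ht hst hne
        exact hind s hs t ht hst ((hadj s t).2 ⟨hst, hne⟩)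
      · intro s hs
        rcases hto s hs with rfl | h
        · exact ⟨a s, ⟨le_refl _, le_add_of_nonneg_right (hlmin.le.trans (hlen s).1)⟩,
            le_refl _, le_add_of_nonneg_right (hlmin.le.trans (hlen s).1)⟩
        · exact ((hadj s v).1 h).2
    have hmain := rounds_bound adj w hw γ hγ1 P k hk V' g hcol k l hsort
    have hAV : V'.filter (fun v => v ∈ l) = V' := Finset.filter_true_of_mem fun v _ => hall v
    rw [hAV] at hmain
    -- exponential bound
    have hkpos : (0:ℝ) < k := by exact_mod_cast hk
    have hk1 : (1:ℝ) ≤ (k:ℝ) := by exact_mod_cast hk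
    have hx0 : (0:ℝ) < 1/(2+γ) := by positivity
    have hx1 : 1/(2+γ) ≤ 1 := by rw [div_le_one h2γ]; linarith
    have hb : 1/((k:ℝ)*(2+γ)) = (1/(2+γ))/(k:ℝ) := by
      rw [div_div, mul_comm]
    have h1 : 0 ≤ 1 - (1/(2+γ))/(k:ℝ) := by
      have h1' : (1/(2+γ))/(k:ℝ) ≤ 1 := div_le_one_of_le₀ (hx1.trans hk1) hkpos.le
      linarith
    have h2 : 1 - (1/(2+γ))/(k:ℝ) ≤ Real.exp (-((1/(2+γ))/(k:ℝ))) := by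
      have := Real.add_one_le_exp (-((1/(2+γ))/(k:ℝ)))
      linarith
    have h3 : (1 - (1/(2+γ))/(k:ℝ))^k ≤ (Real.exp (-((1/(2+γ))/(k:ℝ))))^k :=
      pow_le_pow_left₀ h1 h2 k
    have h4 : (Real.exp (-((1/(2+γ))/(k:ℝ))))^k = Real.exp (-(1/(2+γ))) := by
      rw [← Real.exp_nat_mul]
      congr 1
      field_simp
    have hexp : (1 - 1/((k:ℝ)*(2+γ)))^k ≤ Real.exp (-1/(2+γ)) := by
      rw [hb, neg_div]
      rw [h4] at h3
      exact h3
    have hWV0 : (0:ℝ) ≤ ∑ v ∈ V', w v := Finset.sum_nonneg fun i _ => hw i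
    have hexp' : (1 - 1/((k:ℝ)*(2+γ)))^k * ∑ v ∈ V', w v ≤
        Real.exp (-1/(2+γ)) * ∑ v ∈ V', w v :=
      mul_le_mul_of_nonneg_right hexp hWV0
    nlinarith [hmain, hexp']
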